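/- arXiv:1104.1361 — 6 statements merged into one kernel-verified Lean document; each statement's English description precedes it below -/
import Mathlib

section
/- Let α ∈ (Z_{p^r})^* have multiplicative order q^t, where p, q are distinct primes and t ≥ 1. Then for every b ∈ Z_{q^s} with q^t ∤ b, the element α^b − 1 is invertible in Z_{p^r}, i.e., α^b − 1 ∈ (Z_{p^r})^*. -/
theorem stmt_4 (p q r s t : ℕ) (hp : p.Prime) (hq : q.Prime) (hpq : p ≠ q)
    (hr : 0 < r) (hs : 0 < s) (ht : 1 ≤ t) (hts : t ≤ s)
    (α : (ZMod (p ^ r))ˣ) (hα : orderOf α = q ^ t)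
    (b : ℕ) (hb : ¬ q ^ t ∣ b) :
    IsUnit ((α : ZMod (p ^ r)) ^ b - 1) := by
  haveI : Fact p.Prime := ⟨hp⟩
  haveI : NeZero (p ^ r) := ⟨pow_ne_zero r hp.pos.ne'⟩
  have hpr : p ∣ p ^ r := dvd_pow_self p hr.ne'
  set β : (ZMod (p ^ r))ˣ := α ^ b with hβ
  have hβne : β ≠ 1 := by
    intro h
    exact hb (hα ▸ orderOf_dvd_of_pow_eq_one h)
  have hβdvd : orderOf β ∣ q ^ t := hα ▸ orderOf_pow_dvd b
  have hqβ : q ∣ orderOf β := by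
    obtain ⟨j, hj, hje⟩ := (Nat.dvd_prime_pow hq).mp hβdvd
    rcases Nat.eq_zero_or_pos j with rfl | hjpos
    · simp at hje
      exact absurd hje hβne
    · exact hje ▸ dvd_pow_self q hjpos.ne'
  by_contra h
  -- the nonunit maps to zero under reduction mod p
  let f : ZMod (p ^ r) →+* ZMod p := ZMod.castHom hpr (ZMod p)
  have hfzero : f ((α : ZMod (p ^ r)) ^ b - 1) = 0 := by
    set x : ZMod (p ^ r) := (α : ZMod (p ^ r)) ^ b - 1 with hx
    have hx1 : ¬ (x.val).Coprime (p ^ r) := by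
      intro hc
      exact h (by simpa [ZMod.natCast_val, ZMod.cast_id] using
        (ZMod.isUnit_iff_coprime x.val (p ^ r)).mpr hc)
    have hpdvd : p ∣ x.val := by
      by_contra hpd
      exact hx1 (Nat.Coprime.pow_right r (hp.coprime_iff_not_dvd.mpr hpd).symm)
    have : ((x.val : ℕ) : ZMod p) = 0 := (ZMod.natCast_eq_zero_iff _ _).mpr hpdvd
    calc f x = ((x.val : ℕ) : ZMod p) := by
          rw [ZMod.castHom_apply, ← ZMod.natCast_val]
      _ = 0 := this
  have hfone : f ((α : ZMod (p ^ r)) ^ b) = 1 := by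
    rw [map_sub, map_one, sub_eq_zero] at hfzero
    exact hfzero
  -- β lies in the kernel of the units map
  let g : (ZMod (p ^ r))ˣ →* (ZMod p)ˣ := ZMod.unitsMap hpr
  have hgβ : g β = 1 := by
    ext
    simp [g, ZMod.unitsMap, hβ] at hfone ⊢
    exact hfone
  have hβker : β ∈ g.ker := hgβ
  -- order of β divides the cardinality of the kernel
  have hdvd : orderOf β ∣ Nat.card g.ker := Subgroup.orderOf_dvd_natCard _ hβker
  -- compute the cardinality of the kernel
  have hcard : Nat.card g.ker * (p - 1) = p ^ (r - 1) * (p - 1) := by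
    have h1 : Nat.card (ZMod (p ^ r))ˣ =
        Nat.card ((ZMod (p ^ r))ˣ ⧸ g.ker) * Nat.card g.ker :=
      Subgroup.card_eq_card_quotient_mul_card_subgroup g.ker
    have h2 : Nat.card ((ZMod (p ^ r))ˣ ⧸ g.ker) = Nat.card (ZMod p)ˣ := by
      rw [Nat.card_congr (QuotientGroup.quotientKerEquivOfSurjective g
        (ZMod.unitsMap_surjective hpr)).toEquiv]
    rw [h2] at h1
    have h3 : Nat.card (ZMod (p ^ r))ˣ = p ^ (r - 1) * (p - 1) := by
      rw [Nat.card_eq_fintype_card, ZMod.card_units_eq_totient,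
        Nat.totient_prime_pow hp hr]
    have h4 : Nat.card (ZMod p)ˣ = p - 1 := by
      haveI : NeZero p := ⟨hp.pos.ne'⟩
      rw [Nat.card_eq_fintype_card, ZMod.card_units_eq_totient, Nat.totient_prime hp]
    rw [h3, h4] at h1
    rw [mul_comm, h1, mul_comm]
  have hkercard : Nat.card g.ker = p ^ (r - 1) :=
    Nat.eq_of_mul_eq_mul_right (Nat.sub_pos_of_lt hp.one_lt) hcard
  have : q ∣ p ^ (r - 1) := hkercard ▸ hqβ.trans hdvd
  have : q = p := (Nat.prime_dvd_prime_iff_eq hq hp).mp (hq.dvd_of_dvd_pow this)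
  exact hpq this.symm
end

section
/- Let G = Z_{p^r} ⋊_α Z_{q^s} with ord(α) = q^t, 1 ≤ t ≤ s. Every cyclic subgroup of G is of the form ⟨x^a y^{q^j}⟩ for some 0 ≤ a < p^r and 0 ≤ j < t, or of the form ⟨x^{p^i} y^{q^j}⟩ for some 0 ≤ i ≤ r and t ≤ j ≤ s. -/
open Pointwise

lemma aux_unit (p q r t' : ℕ) (hp : p.Prime) (hq : q.Prime) (hpq : p ≠ q)
    (hr : 0 < r) (ht' : 0 < t') (β : (ZMod (p ^ r))ˣ) (hβ : orderOf β = q ^ t') :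
    IsUnit ((β : ZMod (p ^ r)) - 1) := by
  haveI : Fact p.Prime := ⟨hp⟩
  haveI : NeZero (p ^ r) := ⟨pow_ne_zero r hp.pos.ne'⟩
  have hdvd : p ∣ p ^ r := dvd_pow_self p hr.ne'
  set um := ZMod.unitsMap hdvd with hum
  have hsurj : Function.Surjective um := ZMod.unitsMap_surjective hdvd
  have hcard1 : Nat.card (ZMod (p ^ r))ˣ = Nat.card ((ZMod (p ^ r))ˣ ⧸ um.ker) * Nat.card um.ker :=
    Subgroup.card_eq_card_quotient_mul_card_subgroup um.ker
  have hquot : Nat.card ((ZMod (p ^ r))ˣ ⧸ um.ker) = Nat.card (ZMod p)ˣ :=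
    Nat.card_congr (QuotientGroup.quotientKerEquivOfSurjective um hsurj).toEquiv
  have hcpr : Nat.card (ZMod (p ^ r))ˣ = p ^ (r - 1) * (p - 1) := by
    rw [Nat.card_eq_fintype_card, ZMod.card_units_eq_totient, Nat.totient_prime_pow hp hr]
  have hcp : Nat.card (ZMod p)ˣ = p - 1 := by
    rw [Nat.card_eq_fintype_card, ZMod.card_units_eq_totient, Nat.totient_prime hp]
  rw [hquot, hcp, hcpr] at hcard1
  have hp1 : 0 < p - 1 := Nat.sub_pos_of_lt hp.one_lt
  have hker : Nat.card um.ker = p ^ (r - 1) :=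
    Nat.eq_of_mul_eq_mul_left hp1 (by rw [← hcard1, mul_comm])
  have hne : um β ≠ 1 := by
    intro h
    have hmem : β ∈ um.ker := h
    have hdvd' : orderOf β ∣ p ^ (r - 1) := by
      have h2 : orderOf (um.ker.subtype ⟨β, hmem⟩) = orderOf (⟨β, hmem⟩ : um.ker) :=
        orderOf_injective um.ker.subtype (Subgroup.subtype_injective _) _
      have h3 : um.ker.subtype ⟨β, hmem⟩ = β := rfl
      rw [h3] at h2
      rw [h2, ← hker]
      exact orderOf_dvd_natCard _
    have hq' : q ∣ p ^ (r - 1) := dvd_trans (dvd_pow_self q ht'.ne') (hβ ▸ hdvd')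
    have := hq.dvd_of_dvd_pow hq'
    exact hpq ((Nat.prime_dvd_prime_iff_eq hq hp).mp this).symm
  set w := (β : ZMod (p ^ r)) - 1 with hw
  have h1 : (ZMod.castHom hdvd (ZMod p)) w ≠ 0 := by
    intro h0
    apply hne
    have hcast : ((um β : ZMod p)) = (ZMod.castHom hdvd (ZMod p)) (β : ZMod (p ^ r)) := rfl
    have : (ZMod.castHom hdvd (ZMod p)) (β : ZMod (p ^ r)) = 1 := by
      have := h0
      rw [hw, map_sub, map_one, sub_eq_zero] at this
      exact this
    exact Units.ext (by rw [hcast, this]; rfl)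
  have h2 : ¬ p ∣ w.val := by
    intro hdv
    apply h1
    have : (ZMod.castHom hdvd (ZMod p)) w = ((w.val : ℕ) : ZMod p) := by
      conv_lhs => rw [← ZMod.natCast_zmod_val w]
      rw [map_natCast]
    rw [this]
    exact (ZMod.natCast_eq_zero_iff _ _).mpr hdv
  have hcop : Nat.Coprime w.val (p ^ r) :=
    Nat.Coprime.pow_right r (Nat.coprime_comm.mp ((Nat.Prime.coprime_iff_not_dvd hp).mpr h2))
  have := (ZMod.isUnit_iff_coprime w.val (p ^ r)).mpr hcop
  rwa [ZMod.natCast_zmod_val] at this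

lemma aux_gcd_zpowers {G : Type*} [Group G] (u : G) (c : ℕ) :
    Subgroup.zpowers (u ^ c) = Subgroup.zpowers (u ^ Nat.gcd c (orderOf u)) := by
  apply le_antisymm <;> rw [Subgroup.zpowers_le]
  · have h : Nat.gcd c (orderOf u) ∣ c := Nat.gcd_dvd_left _ _
    have heq : u ^ c = (u ^ Nat.gcd c (orderOf u)) ^ (c / Nat.gcd c (orderOf u)) := by
      rw [← pow_mul, Nat.mul_div_cancel' h]
    rw [heq]
    exact Subgroup.pow_mem _ (Subgroup.mem_zpowers _) _
  · have hbez : ((Nat.gcd c (orderOf u) : ℤ)) =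
        (c : ℤ) * Nat.gcdA c (orderOf u) + ((orderOf u : ℕ) : ℤ) * Nat.gcdB c (orderOf u) :=
      Nat.gcd_eq_gcd_ab c (orderOf u)
    have h1 : u ^ ((Nat.gcd c (orderOf u) : ℤ)) =
        u ^ ((c : ℤ) * Nat.gcdA c (orderOf u)) * u ^ (((orderOf u : ℕ) : ℤ) * Nat.gcdB c (orderOf u)) := by
      rw [← zpow_add, ← hbez]
    have h2 : u ^ (((orderOf u : ℕ) : ℤ) * Nat.gcdB c (orderOf u)) = 1 := by
      rw [zpow_mul, zpow_natCast, pow_orderOf_eq_one, one_zpow]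
    rw [h2, mul_one, zpow_natCast, zpow_mul, zpow_natCast] at h1
    rw [h1]
    exact Subgroup.zpow_mem _ (Subgroup.mem_zpowers _) _

lemma aux_coprime_mul {G : Type*} [Group G] (u v : G) (M N : ℕ) (hMN : Nat.Coprime M N)
    (hc : Commute u v) (hu : u ^ M = 1) (hv : v ^ N = 1) :
    Subgroup.zpowers (u * v) = Subgroup.zpowers u ⊔ Subgroup.zpowers v := by
  apply le_antisymm
  · rw [Subgroup.zpowers_le]
    exact Subgroup.mul_mem _ (Subgroup.mem_sup_left (Subgroup.mem_zpowers u))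
      (Subgroup.mem_sup_right (Subgroup.mem_zpowers v))
  · apply sup_le <;> rw [Subgroup.zpowers_le]
    · obtain ⟨k, hk1, hk2⟩ := Nat.chineseRemainder hMN 1 0
      have hv' : v ^ k = 1 := by
        obtain ⟨d, hd⟩ := (Nat.modEq_zero_iff_dvd).mp hk2
        rw [hd, pow_mul, hv, one_pow]
      have hu' : u ^ k = u := by
        conv_rhs => rw [← pow_one u]
        rw [pow_eq_pow_iff_modEq]
        exact hk1.of_dvd (orderOf_dvd_of_pow_eq_one hu)
      have heq : (u * v) ^ k = u := by rw [hc.mul_pow, hu', hv', mul_one]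
      have hm : (u * v) ^ k ∈ Subgroup.zpowers (u * v) :=
        Subgroup.pow_mem _ (Subgroup.mem_zpowers _) _
      rwa [heq] at hm
    · obtain ⟨k, hk1, hk2⟩ := Nat.chineseRemainder hMN 0 1
      have hu' : u ^ k = 1 := by
        obtain ⟨d, hd⟩ := (Nat.modEq_zero_iff_dvd).mp hk1
        rw [hd, pow_mul, hu, one_pow]
      have hv' : v ^ k = v := by
        conv_rhs => rw [← pow_one v]
        rw [pow_eq_pow_iff_modEq]
        exact hk2.of_dvd (orderOf_dvd_of_pow_eq_one hv)
      have heq : (u * v) ^ k = v := by rw [hc.mul_pow, hu', hv', one_mul]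
      have hm : (u * v) ^ k ∈ Subgroup.zpowers (u * v) :=
        Subgroup.pow_mem _ (Subgroup.mem_zpowers _) _
      rwa [heq] at hm

lemma aux_key {n : ℕ} {G : Type*} [Group G] {x : G} (hx : orderOf x = n) {a b : ℕ}
    (h : a ≡ b [MOD n]) : x ^ a = x ^ b :=
  pow_eq_pow_iff_modEq.mpr (hx ▸ h)

lemma aux_mulval {n : ℕ} (w z : ZMod n) : w.val * z.val ≡ (w * z).val [MOD n] := by
  rw [ZMod.val_mul]; exact (Nat.mod_modEq _ n).symm

lemma aux_addval {n : ℕ} [NeZero n] (w z : ZMod n) : w.val + z.val ≡ (w + z).val [MOD n] := by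
  rw [ZMod.val_add]; exact (Nat.mod_modEq _ n).symm

lemma aux_conj {n : ℕ} {G : Type*} [Group G] {x y : G} (α : (ZMod n)ˣ)
    (hx : orderOf x = n) (hcomm : y * x * y⁻¹ = x ^ ((α : ZMod n)).val) :
    ∀ (c : ℕ) (z : ZMod n), y ^ c * x ^ z.val = x ^ (((α : ZMod n) ^ c * z).val) * y ^ c := by
  have hc1 : ∀ z : ZMod n, y * x ^ z.val = x ^ (((α : ZMod n) * z).val) * y := by
    intro z
    calc y * x ^ z.val = (y * x ^ z.val * y⁻¹) * y := by group
      _ = (y * x * y⁻¹) ^ z.val * y := by rw [conj_pow]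
      _ = (x ^ ((α : ZMod n)).val) ^ z.val * y := by rw [hcomm]
      _ = x ^ (((α : ZMod n)).val * z.val) * y := by rw [← pow_mul]
      _ = x ^ (((α : ZMod n) * z).val) * y := by rw [aux_key hx (aux_mulval _ _)]
  intro c
  induction c with
  | zero => intro z; simp
  | succ c ih =>
    intro z
    have hring : (α : ZMod n) ^ c * ((α : ZMod n) * z) = (α : ZMod n) ^ (c + 1) * z := by ring
    calc y ^ (c + 1) * x ^ z.val = y ^ c * (y * x ^ z.val) := by rw [pow_succ]; group
      _ = y ^ c * (x ^ (((α : ZMod n) * z).val) * y) := by rw [hc1]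
      _ = (y ^ c * x ^ (((α : ZMod n) * z).val)) * y := by group
      _ = (x ^ (((α : ZMod n) ^ c * ((α : ZMod n) * z)).val) * y ^ c) * y := by rw [ih]
      _ = x ^ (((α : ZMod n) ^ (c + 1) * z).val) * y ^ (c + 1) := by
          rw [hring, pow_succ]; group

lemma aux_pow {n : ℕ} [NeZero n] {G : Type*} [Group G] {x y : G} (α : (ZMod n)ˣ)
    (hx : orderOf x = n) (hcomm : y * x * y⁻¹ = x ^ ((α : ZMod n)).val) (b : ℕ) (z : ZMod n) :
    ∀ k : ℕ, (x ^ z.val * y ^ b) ^ k =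
      x ^ ((z * (∑ i ∈ Finset.range k, ((α : ZMod n) ^ b) ^ i)).val) * y ^ (b * k) := by
  have hadd : ∀ w w' : ZMod n, x ^ w.val * x ^ w'.val = x ^ ((w + w').val) := by
    intro w w'
    rw [← pow_add]
    exact aux_key hx (aux_addval _ _)
  intro k
  induction k with
  | zero => simp
  | succ k ih =>
    have hT : (∑ i ∈ Finset.range (k + 1), ((α : ZMod n) ^ b) ^ i) =
        (α : ZMod n) ^ b * (∑ i ∈ Finset.range k, ((α : ZMod n) ^ b) ^ i) + 1 :=
      geom_sum_succ
    have hring : z + (α : ZMod n) ^ b * (z * (∑ i ∈ Finset.range k, ((α : ZMod n) ^ b) ^ i)) =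
        z * (∑ i ∈ Finset.range (k + 1), ((α : ZMod n) ^ b) ^ i) := by
      rw [hT]; ring
    calc (x ^ z.val * y ^ b) ^ (k + 1) = (x ^ z.val * y ^ b) * (x ^ z.val * y ^ b) ^ k := by
          rw [pow_succ']
      _ = x ^ z.val * y ^ b * (x ^ ((z * (∑ i ∈ Finset.range k, ((α : ZMod n) ^ b) ^ i)).val) * y ^ (b * k)) := by rw [ih]
      _ = x ^ z.val * (y ^ b * x ^ ((z * (∑ i ∈ Finset.range k, ((α : ZMod n) ^ b) ^ i)).val)) * y ^ (b * k) := by group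
      _ = x ^ z.val * (x ^ (((α : ZMod n) ^ b * (z * (∑ i ∈ Finset.range k, ((α : ZMod n) ^ b) ^ i))).val) * y ^ b) * y ^ (b * k) := by
          rw [aux_conj α hx hcomm]
      _ = (x ^ z.val * x ^ (((α : ZMod n) ^ b * (z * (∑ i ∈ Finset.range k, ((α : ZMod n) ^ b) ^ i))).val)) * (y ^ b * y ^ (b * k)) := by group
      _ = x ^ ((z + (α : ZMod n) ^ b * (z * (∑ i ∈ Finset.range k, ((α : ZMod n) ^ b) ^ i))).val) * y ^ (b * (k + 1)) := by
          rw [hadd, ← pow_add]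
          congr 1
          ring
      _ = x ^ ((z * (∑ i ∈ Finset.range (k + 1), ((α : ZMod n) ^ b) ^ i)).val) * y ^ (b * (k + 1)) := by rw [hring]

lemma aux_ord (p q r s t : ℕ) (hp : p.Prime) (hq : q.Prime) (hpq : p ≠ q)
    (hr : 0 < r) (hts : t ≤ s)
    {G : Type*} [Group G] (x y : G) (α : (ZMod (p ^ r))ˣ) (hα : orderOf α = q ^ t)
    (hx : orderOf x = p ^ r) (hy : orderOf y = q ^ s)
    (hcomm : y * x * y⁻¹ = x ^ ((α : ZMod (p ^ r)).val))
    (z : ZMod (p ^ r)) (b j : ℕ) (hj : j < t) (hgcd : Nat.gcd b (q ^ s) = q ^ j) :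
    orderOf (x ^ z.val * y ^ b) = q ^ (s - j) := by
  haveI : NeZero (p ^ r) := ⟨pow_ne_zero r hp.pos.ne'⟩
  have hjb : q ^ j ∣ b := hgcd ▸ Nat.gcd_dvd_left b (q ^ s)
  set m := b / q ^ j with hm
  have hbm : b = q ^ j * m := (Nat.mul_div_cancel' hjb).symm
  have hmq : ¬ q ∣ m := by
    intro hd
    obtain ⟨c, hc⟩ := hd
    have h1 : q ^ (j + 1) ∣ b := ⟨c, by rw [hbm, hc, pow_succ]; ring⟩
    have h2 : q ^ (j + 1) ∣ q ^ s := pow_dvd_pow q (by omega)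
    have h3 := Nat.dvd_gcd h1 h2
    rw [hgcd] at h3
    have := (Nat.pow_dvd_pow_iff_le_right hq.one_lt).mp h3
    omega
  have hgcdt : Nat.gcd (q ^ t) b = q ^ j := by
    apply Nat.dvd_antisymm
    · have h1 : Nat.gcd (q ^ t) b ∣ b := Nat.gcd_dvd_right _ _
      have h2 : Nat.gcd (q ^ t) b ∣ q ^ s := (Nat.gcd_dvd_left _ _).trans (pow_dvd_pow q hts)
      exact hgcd ▸ Nat.dvd_gcd h1 h2
    · exact Nat.dvd_gcd (pow_dvd_pow q hj.le) hjb
  have hordβ : orderOf (α ^ b) = q ^ (t - j) := by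
    rw [orderOf_pow, hα, hgcdt]
    exact Nat.pow_div hj.le hq.pos
  have hβpow : (α ^ b) ^ q ^ (s - j) = 1 :=
    orderOf_dvd_iff_pow_eq_one.mp (by rw [hordβ]; exact pow_dvd_pow q (by omega))
  have hunit : IsUnit ((α : ZMod (p ^ r)) ^ b - 1) := by
    have := aux_unit p q r (t - j) hp hq hpq hr (by omega) (α ^ b) hordβ
    rwa [Units.val_pow_eq_pow_val] at this
  have hβ1 : ((α : ZMod (p ^ r)) ^ b) ^ q ^ (s - j) = 1 := by
    have := congrArg (Units.val) hβpow
    rw [Units.val_pow_eq_pow_val, Units.val_pow_eq_pow_val, Units.val_one] at this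
    exact this
  have hT0 : (∑ i ∈ Finset.range (q ^ (s - j)), ((α : ZMod (p ^ r)) ^ b) ^ i) = 0 := by
    have hgs := geom_sum_mul ((α : ZMod (p ^ r)) ^ b) (q ^ (s - j))
    rw [hβ1, sub_self] at hgs
    exact (IsUnit.mul_left_eq_zero hunit).mp hgs
  have hyb : y ^ (b * q ^ (s - j)) = 1 := by
    apply orderOf_dvd_iff_pow_eq_one.mp
    rw [hy]
    have hqq : q ^ j * q ^ (s - j) = q ^ s := by rw [← pow_add]; congr 1; omega
    exact ⟨m, by rw [hbm, ← hqq]; ring⟩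
  have hgone : (x ^ z.val * y ^ b) ^ q ^ (s - j) = 1 := by
    rw [aux_pow α hx hcomm, hT0, mul_zero, ZMod.val_zero, pow_zero, one_mul, hyb]
  have hmin : ∀ k : ℕ, (x ^ z.val * y ^ b) ^ k = 1 → q ^ (s - j) ∣ k := by
    intro k hk
    rw [aux_pow α hx hcomm] at hk
    set u := x ^ (z * ∑ i ∈ Finset.range k, ((α : ZMod (p ^ r)) ^ b) ^ i).val with hu
    have h1 : u = (y ^ (b * k))⁻¹ := eq_inv_of_mul_eq_one_left hk
    have hxone : x ^ (p ^ r) = 1 := by rw [← hx]; exact pow_orderOf_eq_one x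
    have hyone : y ^ (q ^ s) = 1 := by rw [← hy]; exact pow_orderOf_eq_one y
    have hu1 : u ^ (p ^ r) = 1 := by
      rw [hu, ← pow_mul, mul_comm, pow_mul, hxone, one_pow]
    have hu2 : u ^ (q ^ s) = 1 := by
      rw [h1, inv_pow, ← pow_mul, mul_comm, pow_mul, hyone, one_pow, inv_one]
    have hcopr : Nat.Coprime (p ^ r) (q ^ s) :=
      Nat.Coprime.pow r s ((Nat.coprime_primes hp hq).mpr hpq)
    have hordu : orderOf u ∣ Nat.gcd (p ^ r) (q ^ s) :=
      Nat.dvd_gcd (orderOf_dvd_of_pow_eq_one hu1) (orderOf_dvd_of_pow_eq_one hu2)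
    have hu_one : u = 1 := orderOf_eq_one_iff.mp (Nat.dvd_one.mp (hcopr ▸ hordu))
    rw [hu_one, one_mul] at hk
    have hdvd : q ^ s ∣ b * k := hy ▸ orderOf_dvd_of_pow_eq_one hk
    have h2 : q ^ (s - j) ∣ m * k := by
      have h3 : q ^ j * q ^ (s - j) ∣ q ^ j * (m * k) := by
        rw [← pow_add, (by omega : j + (s - j) = s)]
        rw [hbm, mul_assoc] at hdvd
        exact hdvd
      exact (Nat.mul_dvd_mul_iff_left (pow_pos hq.pos j)).mp h3
    have hcop2 : Nat.Coprime (q ^ (s - j)) m :=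
      Nat.Coprime.pow_left _ ((hq.coprime_iff_not_dvd).mpr hmq)
    exact hcop2.dvd_of_dvd_mul_left h2
  exact Nat.dvd_antisymm (orderOf_dvd_of_pow_eq_one hgone) (hmin _ (pow_orderOf_eq_one _))

theorem stmt_7 (p q r s t : ℕ) (hp : p.Prime) (hq : q.Prime) (hpq : p ≠ q)
    (hpodd : Odd p) (hqodd : Odd q)
    (hr : 0 < r) (hs : 0 < s) (ht : 1 ≤ t) (hts : t ≤ s)
    (G : Type*) [Group G] (x y : G)
    (α : (ZMod (p ^ r))ˣ) (hα : orderOf α = q ^ t)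
    (hx : orderOf x = p ^ r) (hy : orderOf y = q ^ s)
    (hcomm : y * x * y⁻¹ = x ^ ((α : ZMod (p ^ r)).val))
    (hgen : Subgroup.closure {x, y} = ⊤)
    (hcard : Nat.card G = p ^ r * q ^ s) :
    ∀ H : Subgroup G, (∃ g : G, H = Subgroup.zpowers g) →
      (∃ a j : ℕ, a < p ^ r ∧ j < t ∧ H = Subgroup.zpowers (x ^ a * y ^ q ^ j)) ∨
      (∃ i j : ℕ, i ≤ r ∧ t ≤ j ∧ j ≤ s ∧
        H = Subgroup.zpowers (x ^ p ^ i * y ^ q ^ j)) := by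
  haveI : NeZero (p ^ r) := ⟨pow_ne_zero r hp.pos.ne'⟩
  haveI : NeZero (q ^ s) := ⟨pow_ne_zero s hq.pos.ne'⟩
  haveI : Fact (1 < p ^ r) := ⟨Nat.one_lt_pow hr.ne' hp.one_lt⟩
  haveI : Finite G := Nat.finite_of_card_ne_zero (by
    rw [hcard]
    exact Nat.mul_ne_zero (pow_ne_zero r hp.pos.ne') (pow_ne_zero s hq.pos.ne'))
  have hxp : x ^ (p ^ r) = 1 := by rw [← hx]; exact pow_orderOf_eq_one x
  have hyq : y ^ (q ^ s) = 1 := by rw [← hy]; exact pow_orderOf_eq_one y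
  have hcop : Nat.Coprime (p ^ r) (q ^ s) :=
    Nat.Coprime.pow r s ((Nat.coprime_primes hp hq).mpr hpq)
  rintro H ⟨g, rfl⟩
  -- Step A: g = x ^ a * y ^ b
  set N := Subgroup.zpowers x with hN
  have hNval : Subgroup.zpowers (x ^ ((α : ZMod (p ^ r)).val)) = N := by
    apply le_antisymm
    · rw [Subgroup.zpowers_le]
      exact Subgroup.pow_mem _ (Subgroup.mem_zpowers x) _
    · rw [Subgroup.zpowers_le]
      have hval : ((α : ZMod (p ^ r)).val) * (((α⁻¹ : (ZMod (p ^ r))ˣ) : ZMod (p ^ r)).val)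
          ≡ 1 [MOD p ^ r] := by
        have h1 := aux_mulval (α : ZMod (p ^ r)) ((α⁻¹ : (ZMod (p ^ r))ˣ) : ZMod (p ^ r))
        have h2 : (α : ZMod (p ^ r)) * ((α⁻¹ : (ZMod (p ^ r))ˣ) : ZMod (p ^ r)) = 1 := by
          rw [← Units.val_mul]
          simp
        rw [h2, ZMod.val_one] at h1
        exact h1
      have heq : (x ^ ((α : ZMod (p ^ r)).val)) ^ (((α⁻¹ : (ZMod (p ^ r))ˣ) : ZMod (p ^ r)).val)
          = x := by
        rw [← pow_mul, aux_key hx hval, pow_one]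
      have hm2 : (x ^ ((α : ZMod (p ^ r)).val)) ^ (((α⁻¹ : (ZMod (p ^ r))ˣ) : ZMod (p ^ r)).val)
          ∈ Subgroup.zpowers (x ^ ((α : ZMod (p ^ r)).val)) :=
        Subgroup.pow_mem _ (Subgroup.mem_zpowers _) _
      rwa [heq] at hm2
  have hmapN : Subgroup.map (MulAut.conj y).toMonoidHom N = N := by
    rw [hN, MonoidHom.map_zpowers]
    have : (MulAut.conj y).toMonoidHom x = x ^ ((α : ZMod (p ^ r)).val) := by
      simp only [MulEquiv.coe_toMonoidHom, MulAut.conj_apply]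
      exact hcomm
    rw [this, hNval]
  have hNnormal : N.Normal := by
    apply Subgroup.normalizer_eq_top_iff.mp
    rw [eq_top_iff, ← hgen, Subgroup.closure_le]
    intro z hz
    simp only [Set.mem_insert_iff, Set.mem_singleton_iff] at hz
    rcases hz with rfl | rfl
    · exact Subgroup.le_normalizer (Subgroup.mem_zpowers z)
    · rw [SetLike.mem_coe, Subgroup.mem_normalizer_iff]
      intro h
      constructor
      · intro hh
        rw [← hmapN]
        exact Subgroup.mem_map.mpr ⟨h, hh, rfl⟩
      · intro hh
        have hmem : z * h * z⁻¹ ∈ Subgroup.map (MulAut.conj z).toMonoidHom N := hmapN.symm ▸ hh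
        obtain ⟨h', hh', heq⟩ := Subgroup.mem_map.mp hmem
        have : h' = h := by
          apply (MulAut.conj z).injective
          simpa using heq
        rwa [← this]
  haveI := hNnormal
  have htop : N ⊔ Subgroup.zpowers y = ⊤ := by
    rw [eq_top_iff, ← hgen, Subgroup.closure_le]
    intro z hz
    simp only [Set.mem_insert_iff, Set.mem_singleton_iff] at hz
    rcases hz with rfl | rfl
    · exact Subgroup.mem_sup_left (Subgroup.mem_zpowers z)
    · exact Subgroup.mem_sup_right (Subgroup.mem_zpowers z)
  have hgmem : g ∈ ((N : Set G) * (Subgroup.zpowers y : Set G)) := by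
    rw [← Subgroup.normal_mul]
    rw [htop]
    exact Subgroup.mem_top g
  obtain ⟨gx, hgx, gy, hgy, hg⟩ := hgmem
  obtain ⟨kx, hkx⟩ := Subgroup.mem_zpowers_iff.mp hgx
  obtain ⟨ky, hky⟩ := Subgroup.mem_zpowers_iff.mp hgy
  have hxa : ∃ a : ℕ, x ^ a = gx := by
    refine ⟨(kx % ((p ^ r : ℕ) : ℤ)).toNat, ?_⟩
    have hnn : (0 : ℤ) ≤ kx % ((p ^ r : ℕ) : ℤ) :=
      Int.emod_nonneg kx (by exact_mod_cast (pow_ne_zero r hp.pos.ne'))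
    rw [← zpow_natCast, Int.toNat_of_nonneg hnn]
    have hzm := zpow_mod_orderOf x kx
    rw [hx] at hzm
    rw [hzm, hkx]
  have hyb : ∃ b : ℕ, y ^ b = gy := by
    refine ⟨(ky % ((q ^ s : ℕ) : ℤ)).toNat, ?_⟩
    have hnn : (0 : ℤ) ≤ ky % ((q ^ s : ℕ) : ℤ) :=
      Int.emod_nonneg ky (by exact_mod_cast (pow_ne_zero s hq.pos.ne'))
    rw [← zpow_natCast, Int.toNat_of_nonneg hnn]
    have hzm := zpow_mod_orderOf y ky
    rw [hy] at hzm
    rw [hzm, hky]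
  obtain ⟨a, ha⟩ := hxa
  obtain ⟨b, hb⟩ := hyb
  have hg' : gx * gy = g := hg
  have hgab : g = x ^ a * y ^ b := by rw [ha, hb]; exact hg'.symm
  -- Step B: case split on valuation of b
  obtain ⟨j, hjs, hgcdj⟩ := (Nat.dvd_prime_pow hq).mp (Nat.gcd_dvd_right b (q ^ s))
  by_cases hjt : j < t
  · -- nonabelian case
    left
    set z : ZMod (p ^ r) := (a : ZMod (p ^ r)) with hz
    have hxaz : x ^ a = x ^ z.val :=
      aux_key hx (by rw [hz, ZMod.val_natCast]; exact (Nat.mod_modEq a (p ^ r)).symm)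
    have hjb : q ^ j ∣ b := hgcdj ▸ Nat.gcd_dvd_left _ _
    set m := b / q ^ j with hm
    have hbm : b = q ^ j * m := (Nat.mul_div_cancel' hjb).symm
    have hmq : ¬ q ∣ m := by
      intro hd
      obtain ⟨c, hc⟩ := hd
      have h1 : q ^ (j + 1) ∣ b := ⟨c, by rw [hbm, hc, pow_succ]; ring⟩
      have h2 : q ^ (j + 1) ∣ q ^ s := pow_dvd_pow q (by omega)
      have h3 := Nat.dvd_gcd h1 h2
      rw [hgcdj] at h3
      have := (Nat.pow_dvd_pow_iff_le_right hq.one_lt).mp h3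
      omega
    have hmcop : Nat.Coprime m (q ^ s) :=
      Nat.Coprime.pow_right s (Nat.coprime_comm.mp ((hq.coprime_iff_not_dvd).mpr hmq))
    set k := ((m : ZMod (q ^ s))⁻¹).val with hk
    have hmk : m * k ≡ 1 [MOD q ^ s] := by
      have h1 : ((m : ZMod (q ^ s)) * (m : ZMod (q ^ s))⁻¹) = 1 :=
        ZMod.coe_mul_inv_eq_one m hmcop
      have h2 : ((m * k : ℕ) : ZMod (q ^ s)) = ((1 : ℕ) : ZMod (q ^ s)) := by
        push_cast
        rw [hk, ZMod.natCast_zmod_val, h1]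
      exact (ZMod.natCast_eq_natCast_iff _ _ _).mp h2
    have hbk : b * k ≡ q ^ j [MOD q ^ s] := by
      have h5 := Nat.ModEq.mul_left (q ^ j) hmk
      rw [mul_one] at h5
      have heq1 : b * k = q ^ j * (m * k) := by rw [hbm]; ring
      rw [heq1]
      exact h5
    set T := ∑ i ∈ Finset.range k, ((α : ZMod (p ^ r)) ^ b) ^ i with hT
    have hgk : g ^ k = x ^ ((z * T).val) * y ^ (q ^ j) := by
      rw [hgab, hxaz, aux_pow α hx hcomm]
      congr 1
      exact aux_key hy hbk
    refine ⟨(z * T).val, j, ZMod.val_lt _, hjt, ?_⟩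
    have hordg : orderOf g = q ^ (s - j) := by
      rw [hgab, hxaz]
      exact aux_ord p q r s t hp hq hpq hr hts x y α hα hx hy hcomm z b j hjt hgcdj
    have hordh : orderOf (x ^ ((z * T).val) * y ^ (q ^ j)) = q ^ (s - j) :=
      aux_ord p q r s t hp hq hpq hr hts x y α hα hx hy hcomm (z * T) (q ^ j) j hjt
        (Nat.gcd_eq_left (pow_dvd_pow q hjs))
    have hle : Subgroup.zpowers (x ^ ((z * T).val) * y ^ (q ^ j)) ≤ Subgroup.zpowers g := by
      rw [Subgroup.zpowers_le, ← hgk]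
      exact Subgroup.pow_mem _ (Subgroup.mem_zpowers g) k
    have hcards : Nat.card (Subgroup.zpowers g) ≤
        Nat.card (Subgroup.zpowers (x ^ ((z * T).val) * y ^ (q ^ j))) := by
      rw [Nat.card_zpowers, Nat.card_zpowers, hordg, hordh]
    exact (Subgroup.eq_of_le_of_card_ge hle hcards).symm
  · -- abelian case
    right
    push_neg at hjt
    have hjb : q ^ j ∣ b := hgcdj ▸ Nat.gcd_dvd_left _ _
    have htb : q ^ t ∣ b := (pow_dvd_pow q hjt).trans hjb
    have hα1 : ∀ c : ℕ, q ^ t ∣ c → (α : ZMod (p ^ r)) ^ c = 1 := by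
      intro c hc
      have h1 : α ^ c = 1 := orderOf_dvd_iff_pow_eq_one.mp (hα ▸ hc)
      have h2 := congrArg Units.val h1
      rwa [Units.val_pow_eq_pow_val, Units.val_one] at h2
    have hcommc : ∀ c : ℕ, q ^ t ∣ c → Commute x (y ^ c) := by
      intro c hc
      have h1 := aux_conj α hx hcomm c 1
      rw [hα1 c hc, mul_one, ZMod.val_one, pow_one] at h1
      exact h1.symm
    obtain ⟨i, hir, hgcdi⟩ := (Nat.dvd_prime_pow hp).mp (Nat.gcd_dvd_right a (p ^ r))
    refine ⟨i, j, hir, hjt, hjs, ?_⟩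
    have h1 : Subgroup.zpowers g = Subgroup.zpowers (x ^ a) ⊔ Subgroup.zpowers (y ^ b) := by
      rw [hgab]
      exact aux_coprime_mul (x ^ a) (y ^ b) (p ^ r) (q ^ s) hcop
        ((hcommc b htb).pow_left a)
        (by rw [← pow_mul, mul_comm, pow_mul, hxp, one_pow])
        (by rw [← pow_mul, mul_comm, pow_mul, hyq, one_pow])
    have h2 : Subgroup.zpowers (x ^ a) = Subgroup.zpowers (x ^ (p ^ i)) := by
      have h := aux_gcd_zpowers x a
      rw [hx, hgcdi] at h
      exact h
    have h3 : Subgroup.zpowers (y ^ b) = Subgroup.zpowers (y ^ (q ^ j)) := by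
      have h := aux_gcd_zpowers y b
      rw [hy, hgcdj] at h
      exact h
    have h4 : Subgroup.zpowers (x ^ (p ^ i)) ⊔ Subgroup.zpowers (y ^ (q ^ j)) =
        Subgroup.zpowers (x ^ (p ^ i) * y ^ (q ^ j)) := by
      refine (aux_coprime_mul (x ^ (p ^ i)) (y ^ (q ^ j)) (p ^ r) (q ^ s) hcop
        ((hcommc (q ^ j) (pow_dvd_pow q hjt)).pow_left (p ^ i))
        (by rw [← pow_mul, mul_comm, pow_mul, hxp, one_pow])
        (by rw [← pow_mul, mul_comm, pow_mul, hyq, one_pow])).symm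
    rw [h1, h2, h3, h4]
end

section
/- Let G = Z_{p^r} ⋊_α Z_{q^s} with ord(α) = q^t. If a ∈ Z_{p^r}, b = v q^j ∈ Z_{q^s} with v ∈ (Z_{q^s})^* and 0 ≤ j < t, then ⟨x^a y^b⟩ = ⟨x^{a'} y^{q^j}⟩, where a' = a(α^{q^j} − 1)/(α^b − 1) in Z_{p^r}. -/
set_option linter.unusedVariables false


lemma keyB (p q r t : ℕ) (hp : p.Prime) (hq : q.Prime) (hpq : p ≠ q) (hr : 0 < r)
    (u : (ZMod (p ^ r))ˣ) (hu : orderOf u ∣ q ^ t) (hu1 : u ≠ 1) :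
    IsUnit ((u : ZMod (p ^ r)) - 1) := by
  haveI : Fact p.Prime := ⟨hp⟩
  haveI : NeZero (p ^ r) := ⟨pow_ne_zero _ hp.pos.ne'⟩
  by_contra hnu
  set c : ZMod (p ^ r) := (u : ZMod (p ^ r)) - 1 with hc
  have hcval : ((c.val : ℕ) : ZMod (p ^ r)) = c := by
    simp [ZMod.natCast_val, ZMod.cast_id]
  have hpc : p ∣ c.val := by
    by_contra hpc
    have : Nat.Coprime c.val (p ^ r) :=
      Nat.Coprime.pow_right r (((hp.coprime_iff_not_dvd).mpr hpc).symm)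
    exact hnu (hcval ▸ (ZMod.isUnit_iff_coprime c.val (p ^ r)).mpr this)
  have hdvd : p ∣ p ^ r := dvd_pow_self p hr.ne'
  set f := ZMod.unitsMap hdvd with hf
  have hfu : f u = 1 := by
    have h0 : (ZMod.castHom hdvd (ZMod p)) c = 0 := by
      rw [← hcval, map_natCast, ZMod.natCast_eq_zero_iff]
      exact hpc
    rw [hc, map_sub, map_one, sub_eq_zero] at h0
    ext
    simpa [f, ZMod.unitsMap_def] using h0
  have hker : u ∈ f.ker := hfu
  have hcard : Nat.card f.ker = p ^ (r - 1) := by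
    have hsurj : Function.Surjective f := ZMod.unitsMap_surjective hdvd
    have e1 : Nat.card (ZMod (p ^ r))ˣ = Nat.card ((ZMod (p^r))ˣ ⧸ f.ker) * Nat.card f.ker :=
      Subgroup.card_eq_card_quotient_mul_card_subgroup f.ker
    have e2 : Nat.card ((ZMod (p^r))ˣ ⧸ f.ker) = Nat.card (ZMod p)ˣ :=
      Nat.card_congr (QuotientGroup.quotientKerEquivOfSurjective f hsurj).toEquiv
    have e3 : Nat.card (ZMod (p ^ r))ˣ = (p ^ r).totient := by
      simp [Nat.card_eq_fintype_card, ZMod.card_units_eq_totient]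
    have e4 : Nat.card (ZMod p)ˣ = p.totient := by
      haveI : NeZero p := ⟨hp.pos.ne'⟩
      simp [Nat.card_eq_fintype_card, ZMod.card_units_eq_totient]
    have e5 : (p ^ r).totient = p ^ (r - 1) * (p - 1) := Nat.totient_prime_pow hp hr
    have e6 : p.totient = p - 1 := Nat.totient_prime hp
    rw [e2, e3, e4, e5, e6] at e1
    have hp1 : 0 < p - 1 := by have := hp.two_le; omega
    have : (p - 1) * Nat.card f.ker = (p - 1) * p ^ (r - 1) := by
      rw [mul_comm] at e1; rw [← e1]
    exact (Nat.eq_of_mul_eq_mul_left hp1 this)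
  have hdvd2 : orderOf u ∣ p ^ (r - 1) := by
    rw [← hcard]
    exact Subgroup.orderOf_dvd_natCard f.ker hker
  have hcop : Nat.Coprime (q ^ t) (p ^ (r - 1)) :=
    Nat.Coprime.pow t (r - 1) ((Nat.coprime_primes hq hp).mpr (Ne.symm hpq))
  have : orderOf u = 1 := Nat.eq_one_of_dvd_coprimes hcop hu hdvd2
  exact hu1 (orderOf_eq_one_iff.mp this)


section
variable {G : Type*} [Group G] (x y : G) (n : ℕ) [NeZero n]

omit [NeZero n] in
lemma keyX (hx : orderOf x = n) : ∀ m m' : ℕ, (m : ZMod n) = (m' : ℕ) → x ^ m = x ^ m' := by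
  intro m m' h
  rw [pow_eq_pow_iff_modEq, hx, ← ZMod.natCast_eq_natCast_iff] at *
  exact h

lemma keyXz (hx : orderOf x = n) (m : ℕ) (z : ZMod n) (h : (m : ZMod n) = z) :
    x ^ m = x ^ z.val := by
  apply keyX x n hx
  simp [ZMod.natCast_val, ZMod.cast_id, h]

lemma keyC (hx : orderOf x = n) (A : ZMod n) (hcomm : y * x * y⁻¹ = x ^ A.val) :
    ∀ d m : ℕ, y ^ d * x ^ m * (y ^ d)⁻¹ = x ^ ((m : ZMod n) * A ^ d).val := by
  have h1 : ∀ m : ℕ, y * x ^ m * y⁻¹ = x ^ ((m : ZMod n) * A).val := by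
    intro m
    have : y * x ^ m * y⁻¹ = (y * x * y⁻¹) ^ m := (conj_pow).symm
    rw [this, hcomm, ← pow_mul]
    apply keyXz x n hx
    push_cast [ZMod.natCast_val, ZMod.cast_id]
    ring
  intro d
  induction d with
  | zero =>
    intro m
    simp only [pow_zero, one_mul, inv_one, mul_one]
    exact keyXz x n hx m _ (by simp)
  | succ d ih =>
    intro m
    have step : y ^ (d + 1) * x ^ m * (y ^ (d + 1))⁻¹
        = y ^ d * (y * x ^ m * y⁻¹) * (y ^ d)⁻¹ := by
      rw [pow_succ]
      group
    rw [step, h1 m, ih]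
    apply keyX x n hx
    push_cast [ZMod.natCast_val, ZMod.cast_id]
    ring

lemma keyA (hx : orderOf x = n) (A : ZMod n) (hcomm : y * x * y⁻¹ = x ^ A.val) :
    ∀ c d k : ℕ, (x ^ c * y ^ d) ^ k =
      x ^ (((c : ZMod n) * (∑ i ∈ Finset.range k, A ^ (d * i))).val) * y ^ (d * k) := by
  have rearr : ∀ X Y Z W : G, X * Y * (Z * W) = X * (Y * Z * Y⁻¹) * (Y * W) := by
    intros; group
  intro c d k
  induction k with
  | zero => simp
  | succ k ih =>
    rw [pow_succ, ih, rearr, keyC x y n hx A hcomm (d * k) c, ← pow_add y, ← pow_add x]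
    have ey : d * k + d = d * (k + 1) := by ring
    rw [ey]
    congr 1
    apply keyX x n hx
    push_cast [ZMod.natCast_val, ZMod.cast_id, Finset.sum_range_succ]
    ring

end

theorem test_main (p q r s t : ℕ) (hp : p.Prime) (hq : q.Prime) (hpq : p ≠ q)
    (hr : 0 < r) (hs : 0 < s) (ht : 1 ≤ t) (hts : t ≤ s)
    (G : Type*) [Group G] (x y : G)
    (α : (ZMod (p ^ r))ˣ) (hα : orderOf α = q ^ t)
    (hx : orderOf x = p ^ r) (hy : orderOf y = q ^ s)
    (hcomm : y * x * y⁻¹ = x ^ ((α : ZMod (p ^ r)).val))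
    (keyB : ∀ u : (ZMod (p ^ r))ˣ, orderOf u ∣ q ^ t → u ≠ 1 → IsUnit ((u : ZMod (p ^ r)) - 1))
    (keyA : ∀ c d k : ℕ, (x ^ c * y ^ d) ^ k =
      x ^ (((c : ZMod (p ^ r)) * (∑ i ∈ Finset.range k, ((α : ZMod (p ^ r))) ^ (d * i))).val) * y ^ (d * k)) :
    ∀ a v j : ℕ, IsUnit (v : ZMod (q ^ s)) → j < t →
      Subgroup.zpowers (x ^ a * y ^ (v * q ^ j)) =
        Subgroup.zpowers
          (x ^ (((a : ZMod (p ^ r)) *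
            (((α : ZMod (p ^ r)) ^ q ^ j - 1) * ((α : ZMod (p ^ r)) ^ (v * q ^ j) - 1)⁻¹)).val) * y ^ q ^ j) := by
  intro a v j hv hj
  haveI : NeZero (p ^ r) := ⟨pow_ne_zero _ hp.pos.ne'⟩
  haveI : NeZero (q ^ s) := ⟨pow_ne_zero _ hq.pos.ne'⟩
  set A : ZMod (p ^ r) := (α : ZMod (p ^ r)) with hA
  set b : ℕ := v * q ^ j with hb
  -- q does not divide v
  have hqv : ¬ q ∣ v := by
    intro hdvd
    have hcop : Nat.Coprime v (q ^ s) := by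
      have := (ZMod.isUnit_iff_coprime v (q ^ s)).mp hv
      exact this
    have : q ∣ Nat.gcd v (q ^ s) := Nat.dvd_gcd hdvd (dvd_pow_self q hs.ne')
    rw [hcop] at this
    exact Nat.Prime.one_lt hq |>.ne' (Nat.le_antisymm (Nat.le_of_dvd one_pos this) hq.one_lt.le ▸ rfl)
  -- α ^ b ≠ 1 and α ^ (q ^ j) ≠ 1
  have hαb_ne : α ^ b ≠ 1 := by
    intro h1
    have hdvd : q ^ t ∣ b := hα ▸ orderOf_dvd_of_pow_eq_one h1
    have h1 : q ^ (j + 1) ∣ v * q ^ j := dvd_trans (pow_dvd_pow q (by omega)) hdvd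
    have h2 : q * q ^ j ∣ v * q ^ j := by rwa [pow_succ, mul_comm (q ^ j) q] at h1
    exact hqv ((Nat.mul_dvd_mul_iff_right (pow_pos hq.pos j)).mp h2)
  have hαqj_ne : α ^ (q ^ j) ≠ 1 := by
    intro h1
    have hdvd : q ^ t ∣ q ^ j := hα ▸ orderOf_dvd_of_pow_eq_one h1
    have := (Nat.pow_dvd_pow_iff_le_right hq.one_lt).mp hdvd
    omega
  have hordb : orderOf (α ^ b) ∣ q ^ t := orderOf_dvd_of_pow_eq_one (by
    rw [← pow_mul, mul_comm, pow_mul, ← hα, pow_orderOf_eq_one, one_pow])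
  have hordqj : orderOf (α ^ (q ^ j)) ∣ q ^ t := orderOf_dvd_of_pow_eq_one (by
    rw [← pow_mul, mul_comm, pow_mul, ← hα, pow_orderOf_eq_one, one_pow])
  have hUb : IsUnit (A ^ b - 1) := by
    have := keyB (α ^ b) hordb hαb_ne
    simpa [hA] using this
  have hUqj : IsUnit (A ^ (q ^ j) - 1) := by
    have := keyB (α ^ (q ^ j)) hordqj hαqj_ne
    simpa [hA] using this
  -- define w
  set w : ℕ := ((v : ZMod (q ^ s))⁻¹).val with hwdef
  have hwcast : ((w : ℕ) : ZMod (q ^ s)) = (v : ZMod (q ^ s))⁻¹ := by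
    simp [hwdef, ZMod.natCast_val, ZMod.cast_id]
  have hbw : ((b * w : ℕ) : ZMod (q ^ s)) = ((q ^ j : ℕ) : ZMod (q ^ s)) := by
    rw [hb]
    push_cast [hwcast]
    calc (v : ZMod (q ^ s)) * (q : ZMod (q ^ s)) ^ j * (v : ZMod (q ^ s))⁻¹
        = (v : ZMod (q ^ s)) * (v : ZMod (q ^ s))⁻¹ * (q : ZMod (q ^ s)) ^ j := by ring
      _ = (q : ZMod (q ^ s)) ^ j := by rw [ZMod.mul_inv_of_unit _ hv, one_mul]
  have hbw' : b * w ≡ q ^ j [MOD q ^ t] :=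
    Nat.ModEq.of_dvd (pow_dvd_pow q hts) ((ZMod.natCast_eq_natCast_iff _ _ _).mp hbw)
  have hαbw : α ^ (b * w) = α ^ (q ^ j) := by
    rw [pow_eq_pow_iff_modEq, hα]; exact hbw'
  have hAbw : A ^ (b * w) = A ^ (q ^ j) := by
    have : ((α ^ (b * w) : (ZMod (p ^ r))ˣ) : ZMod (p ^ r)) = ((α ^ (q ^ j) : (ZMod (p ^ r))ˣ) : ZMod (p ^ r)) := by
      rw [hαbw]
    simpa [hA] using this
  -- geometric sums
  set S : ZMod (p ^ r) := ∑ i ∈ Finset.range w, A ^ (b * i) with hS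
  have hgeom : S * (A ^ b - 1) = A ^ (q ^ j) - 1 := by
    have : S = ∑ i ∈ Finset.range w, (A ^ b) ^ i := by
      simp [hS, pow_mul]
    rw [this, geom_sum_mul, ← pow_mul, hAbw]
  have hSval : S = (A ^ (q ^ j) - 1) * (A ^ b - 1)⁻¹ := by
    have h2 : S * ((A ^ b - 1) * (A ^ b - 1)⁻¹) = (A ^ (q ^ j) - 1) * (A ^ b - 1)⁻¹ := by
      rw [← mul_assoc, hgeom]
    rwa [ZMod.mul_inv_of_unit _ hUb, mul_one] at h2
  set a' : ZMod (p ^ r) := (a : ZMod (p ^ r)) * ((A ^ (q ^ j) - 1) * (A ^ b - 1)⁻¹) with ha'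
  -- g ^ w = h
  have hgw : (x ^ a * y ^ b) ^ w = x ^ a'.val * y ^ (q ^ j) := by
    rw [keyA a b w]
    congr 1
    · congr 1
      rw [← hS, hSval, ha']
    · exact keyX y (q ^ s) hy (b * w) (q ^ j) hbw
  -- h ^ v = g
  have hhv : (x ^ a'.val * y ^ (q ^ j)) ^ v = x ^ a * y ^ b := by
    rw [keyA a'.val (q ^ j) v]
    have hS' : (∑ i ∈ Finset.range v, A ^ (q ^ j * i)) * (A ^ (q ^ j) - 1) = A ^ b - 1 := by
      have h1 : (∑ i ∈ Finset.range v, A ^ (q ^ j * i)) = ∑ i ∈ Finset.range v, (A ^ (q ^ j)) ^ i := by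
        simp [pow_mul]
      rw [h1, geom_sum_mul, ← pow_mul, mul_comm (q ^ j) v, ← hb]
    have hexp : ((a'.val : ℕ) : ZMod (p ^ r)) * (∑ i ∈ Finset.range v, A ^ (q ^ j * i)) = (a : ZMod (p ^ r)) := by
      have hcast : ((a'.val : ℕ) : ZMod (p ^ r)) = a' := by
        simp [ZMod.natCast_val, ZMod.cast_id]
      rw [hcast, ha']
      calc (a : ZMod (p ^ r)) * ((A ^ (q ^ j) - 1) * (A ^ b - 1)⁻¹) * (∑ i ∈ Finset.range v, A ^ (q ^ j * i))
          = (a : ZMod (p ^ r)) * ((∑ i ∈ Finset.range v, A ^ (q ^ j * i)) * (A ^ (q ^ j) - 1)) * (A ^ b - 1)⁻¹ := by ring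
        _ = (a : ZMod (p ^ r)) * ((A ^ b - 1) * (A ^ b - 1)⁻¹) := by rw [hS']; ring
        _ = (a : ZMod (p ^ r)) := by rw [ZMod.mul_inv_of_unit _ hUb, mul_one]
    rw [hexp]
    congr 1
    · exact (keyXz x (p ^ r) hx a (a : ZMod (p ^ r)) rfl).symm
    · congr 1
      ring
  -- conclude
  apply le_antisymm
  · rw [Subgroup.zpowers_le]
    exact hhv ▸ Subgroup.pow_mem _ (Subgroup.mem_zpowers _) v
  · rw [Subgroup.zpowers_le]
    exact hgw ▸ Subgroup.pow_mem _ (Subgroup.mem_zpowers _) w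

theorem stmt_8 (p q r s t : ℕ) (hp : p.Prime) (hq : q.Prime) (hpq : p ≠ q)
    (hpodd : Odd p) (hqodd : Odd q)
    (hr : 0 < r) (hs : 0 < s) (ht : 1 ≤ t) (hts : t ≤ s)
    (G : Type*) [Group G] (x y : G)
    (α : (ZMod (p ^ r))ˣ) (hα : orderOf α = q ^ t)
    (hx : orderOf x = p ^ r) (hy : orderOf y = q ^ s)
    (hcomm : y * x * y⁻¹ = x ^ ((α : ZMod (p ^ r)).val))
    (hgen : Subgroup.closure {x, y} = ⊤)
    (hcard : Nat.card G = p ^ r * q ^ s) :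
    ∀ a v j : ℕ, IsUnit (v : ZMod (q ^ s)) → j < t →
      Subgroup.zpowers (x ^ a * y ^ (v * q ^ j)) =
        Subgroup.zpowers
          (x ^ (((a : ZMod (p ^ r)) *
            (((α : ZMod (p ^ r)) ^ q ^ j - 1) * ((α : ZMod (p ^ r)) ^ (v * q ^ j) - 1)⁻¹)).val) * y ^ q ^ j) := by
  haveI : NeZero (p ^ r) := ⟨pow_ne_zero _ hp.pos.ne'⟩
  exact test_main p q r s t hp hq hpq hr hs ht hts G x y α hα hx hy hcomm
    (fun u => keyB p q r t hp hq hpq hr u)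
    (keyA x y (p ^ r) hx ((α : ZMod (p ^ r))) hcomm)
end

section
/- Let G = Z_{p^r} ⋊_α Z_{q^s} with ord(α) = q^t. If a = u p^i with u ∈ (Z_{p^r})^*, and b = v q^j with v ∈ (Z_{q^s})^* and j ≥ t, then ⟨x^a y^b⟩ = ⟨x^{p^i} y^{q^j}⟩, and this subgroup has order p^{r-i} q^{s-j}. -/
lemma zpowers_pow_coprime {G : Type*} [Group G] (z : G) (k : ℕ)
    (hpos : 0 < orderOf z) (h : Nat.Coprime k (orderOf z)) :
    Subgroup.zpowers (z ^ k) = Subgroup.zpowers z := by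
  apply le_antisymm
  · rw [Subgroup.zpowers_le]
    exact Subgroup.pow_mem _ (Subgroup.mem_zpowers z) k
  · rw [Subgroup.zpowers_le]
    rcases eq_or_lt_of_le (show 1 ≤ orderOf z from hpos) with h1 | h1
    · have : z = 1 := orderOf_eq_one_iff.mp h1.symm
      simp [this]
    · obtain ⟨m, -, hm⟩ := Nat.exists_mul_mod_eq_one_of_coprime h h1
      have hzm : (z ^ k) ^ m = z := by
        rw [← pow_mul, ← pow_mod_orderOf, hm, pow_one]
      exact Subgroup.mem_zpowers_iff.mpr ⟨(m : ℤ), by rw [zpow_natCast]; exact hzm⟩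

theorem stmt_9 (p q r s t : ℕ) (hp : p.Prime) (hq : q.Prime) (hpq : p ≠ q)
    (hpodd : Odd p) (hqodd : Odd q)
    (hr : 0 < r) (hs : 0 < s) (ht : 1 ≤ t) (hts : t ≤ s)
    (G : Type*) [Group G] (x y : G)
    (α : (ZMod (p ^ r))ˣ) (hα : orderOf α = q ^ t)
    (hx : orderOf x = p ^ r) (hy : orderOf y = q ^ s)
    (hcomm : y * x * y⁻¹ = x ^ ((α : ZMod (p ^ r)).val))
    (hgen : Subgroup.closure {x, y} = ⊤)
    (hcard : Nat.card G = p ^ r * q ^ s) :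
    ∀ u v i j : ℕ, IsUnit (u : ZMod (p ^ r)) → IsUnit (v : ZMod (q ^ s)) →
      i ≤ r → t ≤ j → j ≤ s →
      Subgroup.zpowers (x ^ (u * p ^ i) * y ^ (v * q ^ j)) =
          Subgroup.zpowers (x ^ p ^ i * y ^ q ^ j) ∧
        Nat.card (Subgroup.zpowers (x ^ p ^ i * y ^ q ^ j)) = p ^ (r - i) * q ^ (s - j) := by
  intro u v i j hu hv hir htj hjs
  have hp1 : 1 < p := hp.one_lt
  have hq1 : 1 < q := hq.one_lt
  have hpr1 : 1 < p ^ r := Nat.one_lt_pow hr.ne' hp1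
  haveI : Fact (1 < p ^ r) := ⟨hpr1⟩
  haveI : NeZero (p ^ r) := ⟨by omega⟩
  haveI : NeZero (q ^ s) := ⟨(pow_pos hq.pos s).ne'⟩
  -- conjugation formula
  have key : ∀ n : ℕ, y ^ n * x * (y ^ n)⁻¹ = x ^ (((α ^ n : (ZMod (p ^ r))ˣ) : ZMod (p ^ r)).val) := by
    intro n
    induction n with
    | zero => simp [ZMod.val_one]
    | succ n ih =>
      have h1 : y ^ (n + 1) * x * (y ^ (n + 1))⁻¹ = y * (y ^ n * x * (y ^ n)⁻¹) * y⁻¹ := by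
        group
      rw [h1, ih]
      have h2 : y * x ^ (((α ^ n : (ZMod (p ^ r))ˣ) : ZMod (p ^ r)).val) * y⁻¹
          = (y * x * y⁻¹) ^ (((α ^ n : (ZMod (p ^ r))ˣ) : ZMod (p ^ r)).val) := by
        rw [conj_pow]
      rw [h2, hcomm, ← pow_mul]
      rw [pow_eq_pow_iff_modEq, hx]
      have : ((α ^ (n + 1) : (ZMod (p ^ r))ˣ) : ZMod (p ^ r)).val
          = ((α : ZMod (p ^ r)).val * ((α ^ n : (ZMod (p ^ r))ˣ) : ZMod (p ^ r)).val) % p ^ r := by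
        rw [pow_succ']
        push_cast
        rw [ZMod.val_mul]
      rw [this]
      exact (Nat.mod_modEq _ _).symm
  -- y^{q^j} commutes with x
  have hαj : (α : (ZMod (p ^ r))ˣ) ^ (q ^ j) = 1 := by
    apply orderOf_dvd_iff_pow_eq_one.mp
    rw [hα]; exact pow_dvd_pow q htj
  have hcx : Commute x (y ^ (q ^ j)) := by
    have := key (q ^ j)
    rw [hαj] at this
    simp only [Units.val_one, ZMod.val_one, pow_one] at this
    have h := this
    have h' : x * y ^ q ^ j = y ^ q ^ j * x := by
      conv_lhs => rw [← h]
      group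
    exact h'
  have hc2 : Commute (x ^ p ^ i) (y ^ q ^ j) := hcx.pow_left _
  -- orders
  have hoxp : orderOf (x ^ p ^ i) = p ^ (r - i) := by
    rw [orderOf_pow' _ (pow_pos hp.pos i).ne', hx,
      Nat.gcd_eq_right (pow_dvd_pow p hir), Nat.pow_div hir hp.pos]
  have hoyq : orderOf (y ^ q ^ j) = q ^ (s - j) := by
    rw [orderOf_pow' _ (pow_pos hq.pos j).ne', hy,
      Nat.gcd_eq_right (pow_dvd_pow q hjs), Nat.pow_div hjs hq.pos]
  have hcop : (p ^ (r - i)).Coprime (q ^ (s - j)) :=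
    Nat.Coprime.pow _ _ ((Nat.coprime_primes hp hq).mpr hpq)
  have hoz : orderOf (x ^ p ^ i * y ^ q ^ j) = p ^ (r - i) * q ^ (s - j) := by
    rw [hc2.orderOf_mul_eq_mul_orderOf_of_coprime (by rw [hoxp, hoyq]; exact hcop), hoxp, hoyq]
  constructor
  · -- subgroup equality via CRT
    have hcoprs : (p ^ r).Coprime (q ^ s) := Nat.Coprime.pow _ _ ((Nat.coprime_primes hp hq).mpr hpq)
    obtain ⟨k, hk1, hk2⟩ := Nat.chineseRemainder hcoprs u v
    set z := x ^ p ^ i * y ^ q ^ j with hz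
    have hzk : z ^ k = x ^ (u * p ^ i) * y ^ (v * q ^ j) := by
      rw [hz, hc2.mul_pow, ← pow_mul, ← pow_mul]
      congr 1
      · rw [pow_eq_pow_iff_modEq, hx]
        calc p ^ i * k ≡ p ^ i * u [MOD p ^ r] := hk1.mul_left _
          _ = u * p ^ i := mul_comm _ _
      · rw [pow_eq_pow_iff_modEq, hy]
        calc q ^ j * k ≡ q ^ j * v [MOD q ^ s] := hk2.mul_left _
          _ = v * q ^ j := mul_comm _ _
    have hku : Nat.Coprime k (p ^ r) := by
      have : IsUnit ((k : ZMod (p ^ r))) := by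
        rwa [(ZMod.natCast_eq_natCast_iff _ _ _).mpr hk1]
      exact (ZMod.isUnit_iff_coprime k (p ^ r)).mp this
    have hkv : Nat.Coprime k (q ^ s) := by
      have : IsUnit ((k : ZMod (q ^ s))) := by
        rwa [(ZMod.natCast_eq_natCast_iff _ _ _).mpr hk2]
      exact (ZMod.isUnit_iff_coprime k (q ^ s)).mp this
    have hkz : Nat.Coprime k (orderOf z) := by
      rw [hoz]
      exact Nat.Coprime.mul_right
        (hku.coprime_dvd_right (pow_dvd_pow p (Nat.sub_le r i)))
        (hkv.coprime_dvd_right (pow_dvd_pow q (Nat.sub_le s j)))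
    rw [← hzk]
    exact zpowers_pow_coprime z k (by rw [hoz]; positivity) hkz
  · rw [Nat.card_zpowers, hoz]
end

section
/- Let G = Z_{p^r} ⋊_α Z_{q^s} with ord(α) = q^t, 1 ≤ t ≤ s. Every subgroup of G is either of the form ⟨x^{p^i} y^{q^j}⟩ with 0 ≤ i ≤ r and t ≤ j ≤ s, or of the form ⟨x^{p^i}, x^a y^{q^j}⟩ with 0 ≤ i ≤ r, 0 ≤ a < p^r, and 0 ≤ j < t. -/
theorem stmt_10 (p q r s t : ℕ) (hp : p.Prime) (hq : q.Prime) (hpq : p ≠ q)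
    (hpodd : Odd p) (hqodd : Odd q)
    (hr : 0 < r) (hs : 0 < s) (ht : 1 ≤ t) (hts : t ≤ s)
    (G : Type*) [Group G] (x y : G)
    (α : (ZMod (p ^ r))ˣ) (hα : orderOf α = q ^ t)
    (hx : orderOf x = p ^ r) (hy : orderOf y = q ^ s)
    (hcomm : y * x * y⁻¹ = x ^ ((α : ZMod (p ^ r)).val))
    (hgen : Subgroup.closure {x, y} = ⊤)
    (hcard : Nat.card G = p ^ r * q ^ s) :
    ∀ H : Subgroup G,
      (∃ i j : ℕ, i ≤ r ∧ t ≤ j ∧ j ≤ s ∧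
        H = Subgroup.zpowers (x ^ p ^ i * y ^ q ^ j)) ∨
      (∃ i a j : ℕ, i ≤ r ∧ a < p ^ r ∧ j < t ∧
        H = Subgroup.closure {x ^ p ^ i, x ^ a * y ^ q ^ j}) := by
  intro H
  classical
  have hp1 : 1 < p := hp.one_lt
  have hq1 : 1 < q := hq.one_lt
  have hpr1 : 1 < p ^ r := Nat.one_lt_pow hr.ne' hp1
  haveI : NeZero (p ^ r) := ⟨by positivity⟩
  haveI : Fact (1 < p ^ r) := ⟨hpr1⟩
  have hxpr : x ^ (p ^ r) = 1 := hx ▸ pow_orderOf_eq_one x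
  have hyqs : y ^ (q ^ s) = 1 := hy ▸ pow_orderOf_eq_one y
  -- tools for changing exponents of x modulo p^r
  have hxz : ∀ a b : ℤ, ((a : ZMod (p ^ r)) = (b : ZMod (p ^ r))) → x ^ a = x ^ b := by
    intro a b hab
    rw [zpow_eq_zpow_iff_modEq, hx]
    exact (ZMod.intCast_eq_intCast_iff _ _ _).mp hab
  have hxn : ∀ a b : ℕ, ((a : ZMod (p ^ r)) = (b : ZMod (p ^ r))) → x ^ a = x ^ b := by
    intro a b hab
    rw [pow_eq_pow_iff_modEq, hx]
    exact (ZMod.natCast_eq_natCast_iff _ _ _).mp hab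
  have hxkill : ∀ a c : ℤ, x ^ (a + ((p ^ r : ℕ) : ℤ) * c) = x ^ a := by
    intro a c
    rw [zpow_add, zpow_mul, zpow_natCast, hxpr, one_zpow, mul_one]
  -- conjugation formulas
  have conj1 : ∀ c : ℕ, y ^ c * x * (y ^ c)⁻¹ = x ^ (((α : ZMod (p ^ r)) ^ c).val) := by
    intro c
    induction c with
    | zero => simp [ZMod.val_one]
    | succ c ih =>
      have h1 : y ^ (c + 1) * x * (y ^ (c + 1))⁻¹ = y * (y ^ c * x * (y ^ c)⁻¹) * y⁻¹ := by
        rw [pow_succ']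
        group
      have h2 : y * x ^ (((α : ZMod (p ^ r)) ^ c).val) * y⁻¹
          = (y * x * y⁻¹) ^ (((α : ZMod (p ^ r)) ^ c).val) := by
        rw [conj_pow]
      rw [h1, ih, h2, hcomm, ← pow_mul]
      refine hxn _ _ ?_
      push_cast [ZMod.natCast_val, ZMod.cast_id]
      ring
  have conjm : ∀ (c : ℕ) (m : ℤ),
      y ^ c * x ^ m * (y ^ c)⁻¹ = x ^ (((((α : ZMod (p ^ r)) ^ c).val : ℤ)) * m) := by
    intro c m
    have h2 : y ^ c * x ^ m * (y ^ c)⁻¹ = (y ^ c * x * (y ^ c)⁻¹) ^ m := by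
      rw [conj_zpow]
    rw [h2, conj1, ← zpow_natCast x, ← zpow_mul]
  -- normality of ⟨x⟩
  have hN : (Subgroup.zpowers x).Normal := by
    rw [← Subgroup.normalizer_eq_top_iff, eq_top_iff, ← hgen, Subgroup.closure_le]
    intro g hg
    simp only [Set.mem_insert_iff, Set.mem_singleton_iff] at hg
    rcases hg with rfl | rfl
    · exact Subgroup.le_normalizer (Subgroup.mem_zpowers g)
    · rw [SetLike.mem_coe, Subgroup.mem_normalizer_iff]
      intro h
      constructor
      · intro hh
        obtain ⟨m, rfl⟩ := Subgroup.mem_zpowers_iff.mp hh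
        refine Subgroup.mem_zpowers_iff.mpr ⟨(((α : ZMod (p ^ r)).val : ℤ)) * m, ?_⟩
        have h3 := conjm 1 m
        simpa using h3.symm
      · intro hh
        obtain ⟨m, hm⟩ := Subgroup.mem_zpowers_iff.mp hh
        refine Subgroup.mem_zpowers_iff.mpr
          ⟨((((α⁻¹ : (ZMod (p ^ r))ˣ) : ZMod (p ^ r)).val : ℤ)) * m, ?_⟩
        have h3 := conjm 1 (((((α⁻¹ : (ZMod (p ^ r))ˣ) : ZMod (p ^ r)).val : ℤ)) * m)
        simp only [pow_one] at h3
        have h4 : x ^ ((((α : ZMod (p ^ r)).val : ℤ))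
            * (((((α⁻¹ : (ZMod (p ^ r))ˣ) : ZMod (p ^ r)).val : ℤ)) * m)) = x ^ m := by
          refine hxz _ _ ?_
          push_cast [ZMod.natCast_val, ZMod.cast_id]
          have h5 : (α : ZMod (p ^ r)) * ((α⁻¹ : (ZMod (p ^ r))ˣ) : ZMod (p ^ r)) = 1 := by
            rw [← Units.val_mul, mul_inv_cancel, Units.val_one]
          rw [← mul_assoc, h5, one_mul]
        rw [h4] at h3
        have h6 : g * x ^ (((((α⁻¹ : (ZMod (p ^ r))ˣ) : ZMod (p ^ r)).val : ℤ)) * m) * g⁻¹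
            = g * h * g⁻¹ := h3.trans hm
        exact mul_left_cancel (mul_right_cancel h6)
  haveI := hN
  set N := Subgroup.zpowers x with hNdef
  let mk : G →* G ⧸ N := QuotientGroup.mk' N
  have hmk_surj : Function.Surjective mk := QuotientGroup.mk'_surjective N
  have hmkx : mk x = 1 := (QuotientGroup.eq_one_iff x).mpr (Subgroup.mem_zpowers x)
  have hQtop : Subgroup.zpowers (mk y) = ⊤ := by
    have h1 : Subgroup.map mk ⊤ = ⊤ := Subgroup.map_top_of_surjective mk hmk_surj
    rw [← hgen, MonoidHom.map_closure, Set.image_pair, hmkx, Set.insert_eq,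
      Subgroup.closure_union, Subgroup.closure_singleton_one, bot_sup_eq] at h1
    rw [Subgroup.zpowers_eq_closure]
    exact h1
  -- the exponent subgroup for x
  let A : AddSubgroup ℤ :=
    { carrier := {m : ℤ | x ^ m ∈ H}
      zero_mem' := by
        show x ^ (0 : ℤ) ∈ H
        rw [zpow_zero]; exact one_mem H
      add_mem' := fun {a b} ha hb => by
        show x ^ (a + b) ∈ H
        rw [zpow_add]; exact mul_mem ha hb
      neg_mem' := fun {a} ha => by
        show x ^ (-a) ∈ H
        rw [zpow_neg]; exact inv_mem ha }
  have hAmem : ∀ m : ℤ, m ∈ A ↔ x ^ m ∈ H := fun m => Iff.rfl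
  obtain ⟨a0, hA⟩ := Int.subgroup_cyclic A
  have hAdvd : ∀ m : ℤ, m ∈ A ↔ a0 ∣ m := by
    intro m
    rw [hA, AddSubgroup.mem_closure_singleton]
    constructor
    · rintro ⟨k, rfl⟩
      simpa [smul_eq_mul] using dvd_mul_left a0 k
    · rintro ⟨c, rfl⟩
      exact ⟨c, by simp [smul_eq_mul, mul_comm]⟩
  have hApr : ((p ^ r : ℕ) : ℤ) ∈ A := by
    show x ^ ((p ^ r : ℕ) : ℤ) ∈ H
    rw [zpow_natCast, hxpr]
    exact one_mem H
  obtain ⟨i, hir, hieq⟩ := (Nat.dvd_prime_pow hp).mp (show a0.natAbs ∣ p ^ r by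
    have h2 : a0.natAbs ∣ ((p ^ r : ℕ) : ℤ).natAbs :=
      Int.natAbs_dvd_natAbs.mpr ((hAdvd _).mp hApr)
    rwa [Int.natAbs_natCast] at h2)
  have hxpiH : x ^ ((p ^ i : ℕ) : ℤ) ∈ H := by
    refine (hAdvd _).mpr ?_
    rw [← hieq]
    exact Int.dvd_natAbs.mpr dvd_rfl
  have hApi : ∀ m : ℤ, x ^ m ∈ H → ((p ^ i : ℕ) : ℤ) ∣ m := by
    intro m hm
    have := (hAdvd m).mp hm
    rw [← hieq]
    exact (Int.natAbs_dvd).mpr this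
  -- the exponent subgroup for y in the quotient
  let B : AddSubgroup ℤ :=
    { carrier := {m : ℤ | (mk y) ^ m ∈ H.map mk}
      zero_mem' := by
        show (mk y) ^ (0 : ℤ) ∈ H.map mk
        rw [zpow_zero]; exact one_mem _
      add_mem' := fun {a b} ha hb => by
        show (mk y) ^ (a + b) ∈ H.map mk
        rw [zpow_add]; exact mul_mem ha hb
      neg_mem' := fun {a} ha => by
        show (mk y) ^ (-a) ∈ H.map mk
        rw [zpow_neg]; exact inv_mem ha }
  obtain ⟨b0, hB⟩ := Int.subgroup_cyclic B
  have hBdvd : ∀ m : ℤ, m ∈ B ↔ b0 ∣ m := by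
    intro m
    rw [hB, AddSubgroup.mem_closure_singleton]
    constructor
    · rintro ⟨k, rfl⟩
      simpa [smul_eq_mul] using dvd_mul_left b0 k
    · rintro ⟨c, rfl⟩
      exact ⟨c, by simp [smul_eq_mul, mul_comm]⟩
  have hBqs : ((q ^ s : ℕ) : ℤ) ∈ B := by
    show (mk y) ^ ((q ^ s : ℕ) : ℤ) ∈ H.map mk
    rw [zpow_natCast, ← map_pow, hyqs, map_one]
    exact one_mem _
  obtain ⟨j, hjs, hjeq⟩ := (Nat.dvd_prime_pow hq).mp (show b0.natAbs ∣ q ^ s by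
    have h2 : b0.natAbs ∣ ((q ^ s : ℕ) : ℤ).natAbs :=
      Int.natAbs_dvd_natAbs.mpr ((hBdvd _).mp hBqs)
    rwa [Int.natAbs_natCast] at h2)
  have hyqjB : ((q ^ j : ℕ) : ℤ) ∈ B := by
    refine (hBdvd _).mpr ?_
    rw [← hjeq]
    exact Int.dvd_natAbs.mpr dvd_rfl
  have hBqj : ∀ m : ℤ, m ∈ B → ((q ^ j : ℕ) : ℤ) ∣ m := by
    intro m hm
    have := (hBdvd m).mp hm
    rw [← hjeq]
    exact (Int.natAbs_dvd).mpr this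
  -- find g ∈ H with mk g = (mk y)^(q^j)
  have hyqjmap : mk (y ^ (q ^ j : ℕ)) ∈ H.map mk := by
    have := hyqjB
    show (mk (y ^ (q ^ j : ℕ))) ∈ H.map mk
    rw [map_pow, ← zpow_natCast]
    exact this
  obtain ⟨g, hgH, hgeq⟩ := Subgroup.mem_map.mp hyqjmap
  -- write g = x ^ b * y ^ (q ^ j)
  obtain ⟨z1, hz1N, hz1⟩ := (QuotientGroup.mk'_eq_mk' (N := N)).mp hgeq
  obtain ⟨m1, hm1⟩ := Subgroup.mem_zpowers_iff.mp hz1N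
  set b : ℤ := ((((α : ZMod (p ^ r)) ^ (q ^ j)).val : ℤ)) * (-m1) with hbdef
  have hgform : g = x ^ b * y ^ (q ^ j : ℕ) := by
    have h7 := conjm (q ^ j) (-m1)
    have h8 : g = y ^ (q ^ j : ℕ) * (x ^ m1)⁻¹ := by
      rw [hm1]
      exact eq_mul_inv_of_mul_eq hz1
    rw [h8, ← h7]
    group
  -- H is generated by x^(p^i) and g
  have Hclos : H = Subgroup.closure {x ^ ((p ^ i : ℕ) : ℤ), g} := by
    apply le_antisymm
    · intro z hz
      obtain ⟨m', hm'⟩ := Subgroup.mem_zpowers_iff.mp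
        (hQtop ▸ Subgroup.mem_top (mk z) : mk z ∈ Subgroup.zpowers (mk y))
      have hm'B : m' ∈ B := by
        show (mk y) ^ m' ∈ H.map mk
        rw [hm']
        exact ⟨z, hz, rfl⟩
      obtain ⟨k, hk⟩ := hBqj m' hm'B
      have hmkg : mk (g ^ k) = mk z := by
        rw [map_zpow, hgeq, map_pow, ← zpow_natCast (mk y), ← zpow_mul, ← hk, hm']
      obtain ⟨z2, hz2N, hz2⟩ := (QuotientGroup.mk'_eq_mk' (N := N)).mp hmkg
      obtain ⟨m2, hm2⟩ := Subgroup.mem_zpowers_iff.mp hz2N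
      -- z = g ^ k * x ^ m2
      have hzeq : z = g ^ k * x ^ m2 := by rw [hm2, hz2]
      have hxm2H : x ^ m2 ∈ H := by
        have : x ^ m2 = (g ^ k)⁻¹ * z := by rw [hzeq]; group
        rw [this]
        exact mul_mem (inv_mem (zpow_mem hgH k)) hz
      obtain ⟨k2, hk2⟩ := hApi m2 hxm2H
      rw [hzeq, hk2]
      have : x ^ (((p ^ i : ℕ) : ℤ) * k2) = (x ^ ((p ^ i : ℕ) : ℤ)) ^ k2 := zpow_mul x _ _
      rw [this]
      exact mul_mem (zpow_mem (Subgroup.subset_closure (by simp)) k)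
        (zpow_mem (Subgroup.subset_closure (by simp)) k2)
    · rw [Subgroup.closure_le]
      rintro w hw
      simp only [Set.mem_insert_iff, Set.mem_singleton_iff] at hw
      rcases hw with rfl | rfl
      · exact hxpiH
      · exact hgH
  have hco : IsCoprime ((p ^ r : ℕ) : ℤ) ((q ^ s : ℕ) : ℤ) :=
    Nat.isCoprime_iff_coprime.mpr (Nat.Coprime.pow r s ((Nat.coprime_primes hp hq).mpr hpq))
  rcases lt_or_ge j t with hjt | htj
  · -- second form
    right
    have h0 : (0 : ℤ) ≤ b % ((p ^ r : ℕ) : ℤ) := Int.emod_nonneg b (by positivity)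
    have hlt : b % ((p ^ r : ℕ) : ℤ) < ((p ^ r : ℕ) : ℤ) := Int.emod_lt_of_pos b (by positivity)
    refine ⟨i, (b % ((p ^ r : ℕ) : ℤ)).toNat, j, hir, by omega, hjt, ?_⟩
    have hxa : x ^ ((b % ((p ^ r : ℕ) : ℤ)).toNat) = x ^ b := by
      rw [← zpow_natCast x, Int.toNat_of_nonneg h0]
      refine hxz _ _ ?_
      refine (ZMod.intCast_eq_intCast_iff _ _ _).mpr ?_
      show b % ((p ^ r : ℕ) : ℤ) % ((p ^ r : ℕ) : ℤ) = b % ((p ^ r : ℕ) : ℤ)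
      exact Int.emod_emod_of_dvd b dvd_rfl
    rw [Hclos, zpow_natCast, hgform, hxa]
  · -- first form: H = ⟨x^(p^i) y^(q^j)⟩
    left
    have hα1 : (α : ZMod (p ^ r)) ^ (q ^ j) = 1 := by
      have h1 : α ^ (q ^ j) = 1 :=
        orderOf_dvd_iff_pow_eq_one.mp (by rw [hα]; exact pow_dvd_pow q htj)
      rw [← Units.val_pow_eq_pow_val, h1, Units.val_one]
    have hcxw : Commute x (y ^ (q ^ j : ℕ)) := by
      have h1 := conj1 (q ^ j)
      rw [hα1, ZMod.val_one, pow_one] at h1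
      have h2 : y ^ (q ^ j) * x = x * y ^ (q ^ j) := by
        calc y ^ (q ^ j) * x = (y ^ (q ^ j) * x * (y ^ (q ^ j))⁻¹) * y ^ (q ^ j) := by group
          _ = x * y ^ (q ^ j) := by rw [h1]
      exact h2.symm
    set w := y ^ (q ^ j : ℕ) with hwdef
    have hwqs : w ^ (q ^ s) = 1 := by
      rw [hwdef, ← pow_mul, mul_comm (q ^ j) (q ^ s), pow_mul, hyqs, one_pow]
    have hwkill : ∀ a c : ℤ, w ^ (a + ((q ^ s : ℕ) : ℤ) * c) = w ^ a := by
      intro a c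
      rw [zpow_add, zpow_mul, zpow_natCast, hwqs, one_zpow, mul_one]
    obtain ⟨u, v', huv⟩ := hco
    push_cast at huv
    have cb : Commute (x ^ b) w := hcxw.zpow_left b
    have hgq : g ^ (q ^ s : ℕ) = x ^ (b * ((q ^ s : ℕ) : ℤ)) := by
      rw [hgform, cb.mul_pow, hwqs, mul_one, ← zpow_natCast (x ^ b), ← zpow_mul]
    have hxbH : x ^ b ∈ H := by
      have h6 : x ^ (b * ((q ^ s : ℕ) : ℤ)) ∈ H := by
        rw [← hgq]; exact pow_mem hgH _
      have hexp : b = b * ((q ^ s : ℕ) : ℤ) * v' + ((p ^ r : ℕ) : ℤ) * (b * u) := by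
        push_cast
        linear_combination (-b) * huv
      have h7 : x ^ b = (x ^ (b * ((q ^ s : ℕ) : ℤ))) ^ v' := by
        calc x ^ b = x ^ (b * ((q ^ s : ℕ) : ℤ) * v' + ((p ^ r : ℕ) : ℤ) * (b * u)) := by
              rw [← hexp]
          _ = x ^ (b * ((q ^ s : ℕ) : ℤ) * v') := hxkill _ _
          _ = (x ^ (b * ((q ^ s : ℕ) : ℤ))) ^ v' := zpow_mul x _ _
      rw [h7]
      exact zpow_mem h6 v'
    have hwH : w ∈ H := by
      have h6 := mul_mem (inv_mem hxbH) hgH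
      rwa [hgform, inv_mul_cancel_left] at h6
    obtain ⟨kb, hkb⟩ := hApi b hxbH
    have cpi : Commute (x ^ (p ^ i : ℕ)) w := hcxw.pow_left _
    have hz0q : (x ^ (p ^ i : ℕ) * w) ^ (q ^ s) = x ^ ((p ^ i * q ^ s : ℕ)) := by
      rw [cpi.mul_pow, hwqs, mul_one, ← pow_mul]
    have hz0p : (x ^ (p ^ i : ℕ) * w) ^ (p ^ r) = w ^ (p ^ r) := by
      rw [cpi.mul_pow, ← pow_mul, mul_comm (p ^ i) (p ^ r), pow_mul, hxpr, one_pow, one_mul]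
    have hxpi_mem : x ^ ((p ^ i : ℕ) : ℤ) ∈ Subgroup.zpowers (x ^ (p ^ i : ℕ) * w) := by
      have h9 : (((x ^ (p ^ i : ℕ) * w) ^ (q ^ s)) : G) ^ v' = x ^ ((p ^ i : ℕ) : ℤ) := by
        rw [hz0q, ← zpow_natCast x (p ^ i * q ^ s), ← zpow_mul]
        have hexp : ((p ^ i * q ^ s : ℕ) : ℤ) * v'
            = ((p ^ i : ℕ) : ℤ) + ((p ^ r : ℕ) : ℤ) * (-(((p ^ i : ℕ) : ℤ) * u)) := by
          push_cast
          linear_combination ((p : ℤ) ^ i) * huv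
        rw [hexp, hxkill]
      rw [← h9]
      exact zpow_mem (pow_mem (Subgroup.mem_zpowers _) _) v'
    have hw_mem : w ∈ Subgroup.zpowers (x ^ (p ^ i : ℕ) * w) := by
      have h9 : (((x ^ (p ^ i : ℕ) * w) ^ (p ^ r)) : G) ^ u = w := by
        rw [hz0p, ← zpow_natCast w (p ^ r), ← zpow_mul]
        have hexp : ((p ^ r : ℕ) : ℤ) * u = (1 : ℤ) + ((q ^ s : ℕ) : ℤ) * (-v') := by
          push_cast
          linear_combination huv
        rw [hexp, hwkill, zpow_one]
      have h10 := zpow_mem (pow_mem (Subgroup.mem_zpowers (x ^ (p ^ i : ℕ) * w)) (p ^ r)) u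
      rwa [h9] at h10
    have hgmem : g ∈ Subgroup.zpowers (x ^ (p ^ i : ℕ) * w) := by
      rw [hgform, hkb, zpow_mul x]
      exact mul_mem (zpow_mem hxpi_mem kb) hw_mem
    refine ⟨i, j, hir, htj, hjs, ?_⟩
    apply le_antisymm
    · rw [Hclos, Subgroup.closure_le]
      rintro z hzz
      simp only [Set.mem_insert_iff, Set.mem_singleton_iff] at hzz
      rcases hzz with rfl | rfl
      · exact hxpi_mem
      · exact hgmem
    · rw [Subgroup.zpowers_le]
      exact mul_mem (by rw [← zpow_natCast x]; exact hxpiH) hwH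
end

section
/- Let α ∈ (Z_{p^r})^* have order q^t (p, q distinct primes, t ≥ 1) and fix 0 ≤ j < t. Define S(n) = (α^{n q^j} − 1)/(α^{q^j} − 1) in Z_{p^r}. Then S is injective on {0, 1, …, q^{t-j} − 1}. -/
theorem stmt_15 (p q r t j : ℕ) (hp : p.Prime) (hq : q.Prime) (hpq : p ≠ q)
    (hr : 0 < r) (ht : 1 ≤ t) (hj : j < t)
    (α : (ZMod (p ^ r))ˣ) (hα : orderOf α = q ^ t) :
    Set.InjOn (fun n : ℕ => ((α : ZMod (p ^ r)) ^ (n * q ^ j) - 1) * ((α : ZMod (p ^ r)) ^ q ^ j - 1)⁻¹)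
      (Set.Iio (q ^ (t - j))) := by
  haveI : Fact p.Prime := ⟨hp⟩
  haveI : NeZero (p ^ r) := ⟨pow_ne_zero _ hp.ne_zero⟩
  set β : (ZMod (p ^ r))ˣ := α ^ q ^ j with hβ
  set x : ZMod (p ^ r) := (α : ZMod (p ^ r)) ^ q ^ j with hx
  have hxβ : (β : ZMod (p ^ r)) = x := by simp [hβ, hx]
  -- order of β
  have horder : orderOf β = q ^ (t - j) := by
    rw [hβ, orderOf_pow, hα, Nat.gcd_eq_right (pow_dvd_pow q hj.le),
      Nat.pow_div hj.le hq.pos]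
  -- x - 1 is a unit
  have hunit : IsUnit (x - 1) := by
    by_contra hne
    -- then p divides x - 1 in ZMod (p^r)
    have hv : ((x - 1).val : ZMod (p ^ r)) = x - 1 := by
      simp [ZMod.natCast_val, ZMod.cast_id]
    have hcop : ¬ (x - 1).val.Coprime (p ^ r) := by
      intro h
      exact hne (hv ▸ (ZMod.isUnit_iff_coprime _ _).2 h)
    have hpdvd : p ∣ (x - 1).val := by
      by_contra hpd
      exact hcop (Nat.Coprime.pow_right _ ((hp.coprime_iff_not_dvd).2 hpd).symm)
    have hdv : (p : ZMod (p ^ r)) ∣ x - 1 := by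
      obtain ⟨c, hc⟩ := hpdvd
      exact ⟨(c : ZMod (p ^ r)), by rw [← hv, hc]; push_cast; ring⟩
    have hkey := dvd_sub_pow_of_dvd_sub (b := (1 : ZMod (p ^ r))) (by simpa using hdv) (r - 1)
    rw [Nat.sub_add_cancel hr] at hkey
    have hz : ((p : ZMod (p ^ r)) ^ r) = 0 := by
      rw [← Nat.cast_pow, ZMod.natCast_self]
    rw [hz, zero_dvd_iff, sub_eq_zero, one_pow] at hkey
    -- so β ^ (p ^ (r-1)) = 1
    have hβ1 : β ^ p ^ (r - 1) = 1 := by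
      ext
      push_cast [hxβ]
      exact hkey
    have hdvd : orderOf β ∣ p ^ (r - 1) := orderOf_dvd_of_pow_eq_one hβ1
    rw [horder] at hdvd
    have hq1 : q ∣ p ^ (r - 1) :=
      dvd_trans (dvd_pow_self q (Nat.sub_ne_zero_of_lt hj)) hdvd
    exact hpq ((Nat.prime_dvd_prime_iff_eq hq hp).1 (hq.dvd_of_dvd_pow hq1)).symm
  -- injectivity
  intro n hn m hm hnm
  simp only at hnm
  have hxn : ∀ k : ℕ, (α : ZMod (p ^ r)) ^ (k * q ^ j) = x ^ k := fun k => by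
    rw [hx, ← pow_mul, mul_comm]
  rw [hxn n, hxn m] at hnm
  have h2 : x ^ n - 1 = x ^ m - 1 := by
    have := congrArg (· * (x - 1)) hnm
    simpa [mul_assoc, ZMod.inv_mul_of_unit _ hunit] using this
  have h3 : β ^ n = β ^ m := by
    ext
    push_cast [hxβ]
    linear_combination h2
  have := pow_injOn_Iio_orderOf (x := β)
  rw [horder] at this
  exact this hn hm h3
end
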